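/- Let p > q ≥ 1 be coprime integers and let (b_1,…,b_k), b_i ≥ 2, be the tuple with [b_1,…,b_k] = p/(p−q). Suppose k ≥ 4, b_i ≥ 3 for every i with 2 ≤ i ≤ k−2, and b_k ≥ k−2. Then for all integers r, s ≥ 0 with r + s + 4 = k, the k-tuple n(r,s) = (1, 2,…,2, 3, 2,…,2, 1, s+2) — consisting of a 1, followed by r twos, a 3, s twos, a 1, and final entry s+2 — belongs to Z_{p,q}. -/

import Mathlib

/-- Hirzebruch–Jung continued fraction `[n₁,…,n_k] = n₁ - 1/[n₂,…,n_k]`. -/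
def hjcf : List ℤ → ℚ
  | [] => 0
  | [n] => (n : ℚ)
  | n :: m :: l => (n : ℚ) - (hjcf (m :: l))⁻¹

/-- A tuple is admissible if every proper tail value used as a denominator is nonzero. -/
def HJAdmissible : List ℤ → Prop
  | [] => True
  | [_] => True
  | _ :: m :: l => hjcf (m :: l) ≠ 0 ∧ HJAdmissible (m :: l)

/-- `Blowup n n'` : `n'` is obtained from `n` by a single blowup, i.e. `n` is obtained
from `n'` by a blowdown at an entry equal to `1`. -/
inductive Blowup : List ℤ → List ℤ → Prop
  | head (x : ℤ) (l : List ℤ) : Blowup (x :: l) (1 :: (x + 1) :: l)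
  | last (l : List ℤ) (x : ℤ) : Blowup (l ++ [x]) (l ++ [x + 1, 1])
  | mid (a : List ℤ) (x y : ℤ) (b : List ℤ) :
      Blowup (a ++ x :: y :: b) (a ++ (x + 1) :: 1 :: (y + 1) :: b)

/-- The set `Z_{p,q}` attached to the tuple `b = (b₁,…,b_k)`: admissible integer tuples
`(n₁,…,n_k)` with `[n₁,…,n_k] = 0` and `0 ≤ nᵢ ≤ bᵢ` for all `i`. -/
def Zset (b : List ℤ) : Set (List ℤ) :=
  {n | HJAdmissible n ∧ hjcf n = 0 ∧ List.Forall₂ (fun x y => 0 ≤ x ∧ x ≤ y) n b}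

lemma hjcf_cons (x : ℤ) (l : List ℤ) (hl : l ≠ []) :
    hjcf (x :: l) = (x : ℚ) - (hjcf l)⁻¹ := by
  cases l with
  | nil => simp at hl
  | cons m t => rfl

lemma adm_cons (x : ℤ) (l : List ℤ) (hl : l ≠ []) :
    HJAdmissible (x :: l) ↔ hjcf l ≠ 0 ∧ HJAdmissible l := by
  cases l with
  | nil => simp at hl
  | cons m t => rfl

lemma L1 (m : ℕ) (l : List ℤ) (hl : l ≠ []) (ha : HJAdmissible l)
    (h : hjcf l = ((m : ℚ) + 1) / ((m : ℚ) + 2)) :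
    ∀ j, j ≤ m + 1 → HJAdmissible (List.replicate j 2 ++ l) ∧
      hjcf (List.replicate j 2 ++ l) = ((m : ℚ) + 1 - j) / ((m : ℚ) + 2 - j) := by
  intro j
  induction j with
  | zero => intro _; simpa [ha] using h
  | succ j ih =>
    intro hj
    obtain ⟨ha', hv⟩ := ih (by omega)
    have hne' : List.replicate j (2:ℤ) ++ l ≠ [] := by simp [hl]
    have hd : ((m : ℚ) + 2 - j) ≠ 0 := by
      have : (j : ℚ) ≤ m + 1 := by exact_mod_cast Nat.cast_le.mpr (by omega : j ≤ m + 1)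
      linarith
    have hn : ((m : ℚ) + 1 - j) ≠ 0 := by
      have : (j : ℚ) ≤ m := by exact_mod_cast Nat.cast_le.mpr (by omega : j ≤ m)
      linarith
    have hnz : hjcf (List.replicate j 2 ++ l) ≠ 0 := by
      rw [hv]; exact div_ne_zero hn hd
    have heq : List.replicate (j+1) (2:ℤ) ++ l = 2 :: (List.replicate j 2 ++ l) := by
      simp [List.replicate_succ]
    constructor
    · rw [heq, adm_cons _ _ hne']; exact ⟨hnz, ha'⟩
    · rw [heq, hjcf_cons _ _ hne', hv]
      push_cast
      rw [inv_div]
      have h1 : (m:ℚ) + 2 - ((j:ℚ) + 1) = (m:ℚ) + 1 - (j:ℚ) := by ring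
      rw [h1, eq_div_iff hn, sub_mul, div_mul_cancel₀ _ hn]
      ring
  
lemma L2 (l : List ℤ) (hl : l ≠ []) (ha : HJAdmissible l) (h : hjcf l = 1) :
    ∀ j, HJAdmissible (List.replicate j 2 ++ l) ∧ hjcf (List.replicate j 2 ++ l) = 1 := by
  intro j
  induction j with
  | zero => simpa [ha] using h
  | succ j ih =>
    obtain ⟨ha', hv⟩ := ih
    have hne' : List.replicate j (2:ℤ) ++ l ≠ [] := by simp [hl]
    have heq : List.replicate (j+1) (2:ℤ) ++ l = 2 :: (List.replicate j 2 ++ l) := by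
      simp [List.replicate_succ]
    constructor
    · rw [heq, adm_cons _ _ hne']; exact ⟨by rw [hv]; norm_num, ha'⟩
    · rw [heq, hjcf_cons _ _ hne', hv]; norm_num

lemma getElem_eq_of_eq {l : List ℤ} {i j : ℕ} (h : i = j) (hi : i < l.length) :
    l[i] = l[j]'(h ▸ hi) := by subst h; rfl

lemma pat (r s : ℕ) (c : ℤ) (j : ℕ) (hj : j < r + s + 3) :
    (List.replicate r (2:ℤ) ++ 3 :: (List.replicate s (2:ℤ) ++ [1, c]))[j]'(by simp; omega) =
      if j < r then 2 else if j = r then 3 else if j < r + s + 1 then 2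
        else if j = r + s + 1 then 1 else c := by
  rcases lt_trichotomy j r with h | h | h
  · rw [List.getElem_append_left (by simpa using h)]
    simp [h]
  · subst h
    rw [List.getElem_append_right (by simp)]
    simp
  · rw [List.getElem_append_right (by simp; omega)]
    obtain ⟨m, hm⟩ : ∃ m, j - (List.replicate r (2:ℤ)).length = m + 1 := ⟨j - r - 1, by simp; omega⟩
    have hjm : j = r + 1 + m := by simp at hm; omega
    rw [getElem_eq_of_eq hm, List.getElem_cons_succ]
    rcases lt_trichotomy m s with h2 | h2 | h2
    · rw [List.getElem_append_left (by simpa using h2)]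
      simp [hjm]
      omega
    · subst h2
      rw [List.getElem_append_right (by simp)]
      simp [hjm]
      omega
    · have h3 : m = s + 1 := by simp at hm; omega
      subst h3
      rw [List.getElem_append_right (by simp)]
      simp [hjm]
      omega

/-- If `k ≥ 4`, `bᵢ ≥ 3` for `2 ≤ i ≤ k-2`, and `b_k ≥ k-2`, then for all `r,s ≥ 0`
with `r+s+4 = k` the tuple `n(r,s) = (1,2,…,2,3,2,…,2,1,s+2)` (with `r` twos after the
leading `1` and `s` twos after the `3`) belongs to `Z_{p,q}`. -/
theorem stmt10 (p q : ℤ) (hq : 1 ≤ q) (hpq : q < p) (hcop : IsCoprime p q)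
    (b : List ℤ) (hne : b ≠ []) (hb2 : ∀ x ∈ b, 2 ≤ x)
    (hb : hjcf b = (p : ℚ) / ((p : ℚ) - (q : ℚ)))
    (hk : 4 ≤ b.length)
    (hmid : ∀ (i : ℕ) (h : i < b.length), 1 ≤ i → i + 3 ≤ b.length → 3 ≤ b[i])
    (hlast : (b.length : ℤ) - 2 ≤ b.getLast hne)
    (r s : ℕ) (hrs : r + s + 4 = b.length) :
    (1 :: (List.replicate r (2 : ℤ) ++ 3 ::
      (List.replicate s (2 : ℤ) ++ [1, (s : ℤ) + 2]))) ∈ Zset b := by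
  set l0 : List ℤ := [1, (s : ℤ) + 2] with hl0
  have hs2 : ((s : ℚ) + 2) ≠ 0 := by positivity
  have adm0 : HJAdmissible l0 := by
    constructor
    · show ((((s : ℤ) + 2 : ℤ)) : ℚ) ≠ 0
      push_cast; exact hs2
    · trivial
  have hv0 : hjcf l0 = ((s : ℚ) + 1) / ((s : ℚ) + 2) := by
    show ((1 : ℤ) : ℚ) - ((((s : ℤ) + 2 : ℤ)) : ℚ)⁻¹ = _
    push_cast
    field_simp
    ring
  obtain ⟨adm1, hv1⟩ := L1 s l0 (by simp [hl0]) adm0 hv0 s (by omega)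
  set l1 : List ℤ := List.replicate s 2 ++ l0 with hl1
  have hl1ne : l1 ≠ [] := by simp [hl1, hl0]
  have hv1' : hjcf l1 = 1 / 2 := by
    rw [hv1]; push_cast; norm_num
  set l2 : List ℤ := 3 :: l1 with hl2
  have hl2ne : l2 ≠ [] := by simp [hl2]
  have adm2 : HJAdmissible l2 := by
    rw [hl2, adm_cons _ _ hl1ne]
    exact ⟨by rw [hv1']; norm_num, adm1⟩
  have hv2 : hjcf l2 = 1 := by
    rw [hl2, hjcf_cons _ _ hl1ne, hv1']; norm_num
  obtain ⟨adm3, hv3⟩ := L2 l2 hl2ne adm2 hv2 r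
  set l3 : List ℤ := List.replicate r 2 ++ l2 with hl3
  have hl3ne : l3 ≠ [] := by simp [hl3, hl2]
  refine ⟨?_, ?_, ?_⟩
  · rw [show (1 :: (List.replicate r (2 : ℤ) ++ 3 ::
      (List.replicate s (2 : ℤ) ++ [1, (s : ℤ) + 2]))) = 1 :: l3 from rfl,
      adm_cons _ _ hl3ne]
    exact ⟨by rw [hv3]; norm_num, adm3⟩
  · rw [show (1 :: (List.replicate r (2 : ℤ) ++ 3 ::
      (List.replicate s (2 : ℤ) ++ [1, (s : ℤ) + 2]))) = 1 :: l3 from rfl,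
      hjcf_cons _ _ hl3ne, hv3]
    norm_num
  · rw [List.forall₂_iff_get]
    constructor
    · simp [hl3, hl2, hl1, hl0]; omega
    · intro i h1 h2
      simp only [List.get_eq_getElem]
      have hbi : 2 ≤ b[i] := hb2 _ (List.getElem_mem _)
      rcases Nat.eq_zero_or_pos i with hi0 | hi0
      · subst hi0
        simp only [List.getElem_cons_zero]
        omega
      · obtain ⟨j, rfl⟩ : ∃ j, i = j + 1 := ⟨i - 1, by omega⟩
        rw [List.getElem_cons_succ]
        have hjlt : j < r + s + 3 := by
          simp [hl3, hl2, hl1, hl0] at h1; omega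
        rw [pat r s ((s : ℤ) + 2) j hjlt]
        split_ifs with c1 c2 c3 c4
        · exact ⟨by norm_num, hbi⟩
        · exact ⟨by norm_num, hmid (j + 1) h2 (by omega) (by omega)⟩
        · exact ⟨by norm_num, hbi⟩
        · exact ⟨by norm_num, by omega⟩
        · have hj : j = r + s + 2 := by omega
          refine ⟨by positivity, ?_⟩
          calc (s : ℤ) + 2 ≤ (b.length : ℤ) - 2 := by omega
            _ ≤ b.getLast hne := hlast
            _ = b[b.length - 1]'(by omega) := List.getLast_eq_getElem hne
            _ = b[j + 1] := (getElem_eq_of_eq (by omega) _).symm
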